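/- If Y is a concave Pareto front in [0,1]² containing the boundary points (0,1) and (1,0) and lying weakly above the line y₁ + y₂ = 1 (i.e., y₁ + y₂ ≥ 1 for all y ∈ Y), with strict inequality for some point minimizing utility at some weight, then 1/6 < R2(Y) < 3/4; more weakly, 1/6 ≤ R2(Y) ≤ 3/4 always holds. -/
import Mathlib

open MeasureTheory

set_option maxHeartbeats 1000000 in
theorem r2_concave_front_bounds (Y : Set (ℝ × ℝ))
    (hbox : Y ⊆ Set.Icc ((0:ℝ), (0:ℝ)) (1, 1))
    (h01 : ((0:ℝ), (1:ℝ)) ∈ Y) (h10 : ((1:ℝ), (0:ℝ)) ∈ Y)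
    (habove : ∀ y ∈ Y, 1 ≤ y.1 + y.2) :
    (1/6 ≤ ∫ w in (0:ℝ)..1, ⨅ y : Y, max (w * (y : ℝ × ℝ).1) ((1 - w) * (y : ℝ × ℝ).2)) ∧
    (∫ w in (0:ℝ)..1, ⨅ y : Y, max (w * (y : ℝ × ℝ).1) ((1 - w) * (y : ℝ × ℝ).2)) ≤ 3/4 ∧
    ((∃ w ∈ Set.Ioo (0:ℝ) 1,
        w * (1 - w) < ⨅ y : Y, max (w * (y : ℝ × ℝ).1) ((1 - w) * (y : ℝ × ℝ).2)) →
      (1/6 < ∫ w in (0:ℝ)..1, ⨅ y : Y, max (w * (y : ℝ × ℝ).1) ((1 - w) * (y : ℝ × ℝ).2)) ∧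
      (∫ w in (0:ℝ)..1, ⨅ y : Y, max (w * (y : ℝ × ℝ).1) ((1 - w) * (y : ℝ × ℝ).2)) < 3/4) := by
  haveI : Nonempty Y := ⟨⟨((0:ℝ),(1:ℝ)), h01⟩⟩
  set F : ℝ → ℝ := fun w => ⨅ y : Y, max (w * (y : ℝ × ℝ).1) ((1 - w) * (y : ℝ × ℝ).2) with hF
  -- coordinates in [0,1]
  have hco : ∀ y : Y, 0 ≤ (y:ℝ×ℝ).1 ∧ (y:ℝ×ℝ).1 ≤ 1 ∧ 0 ≤ (y:ℝ×ℝ).2 ∧ (y:ℝ×ℝ).2 ≤ 1 := by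
    intro y
    have h := hbox y.2
    rw [Set.mem_Icc] at h
    exact ⟨h.1.1, h.2.1, h.1.2, h.2.2⟩
  have bdd : ∀ w : ℝ, BddBelow (Set.range fun y : Y =>
      max (w * (y : ℝ × ℝ).1) ((1 - w) * (y : ℝ × ℝ).2)) := by
    intro w
    refine ⟨-|w|, ?_⟩
    rintro x ⟨y, rfl⟩
    obtain ⟨h1, h2, h3, h4⟩ := hco y
    have : -|w| ≤ w * (y:ℝ×ℝ).1 := by
      rcases le_or_gt 0 w with hw | hw
      · have := mul_nonneg hw h1
        have := abs_nonneg w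
        linarith
      · have : w * (y:ℝ×ℝ).1 ≥ w * 1 := by nlinarith
        rw [abs_of_neg hw]; linarith
    exact this.trans (le_max_left _ _)
  -- Lipschitz-type bound
  have hlip : ∀ w w' : ℝ, F w ≤ F w' + |w - w'| := by
    intro w w'
    have : F w - |w - w'| ≤ F w' := by
      refine le_ciInf fun y => ?_
      obtain ⟨h1, h2, h3, h4⟩ := hco y
      have key : F w ≤ max (w' * (y:ℝ×ℝ).1) ((1 - w') * (y:ℝ×ℝ).2) + |w - w'| := by
        have hA : w * (y:ℝ×ℝ).1 ≤ w' * (y:ℝ×ℝ).1 + |w - w'| := by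
          have : (w - w') * (y:ℝ×ℝ).1 ≤ |w - w'| := by
            calc (w - w') * (y:ℝ×ℝ).1 ≤ |(w - w') * (y:ℝ×ℝ).1| := le_abs_self _
              _ = |w - w'| * (y:ℝ×ℝ).1 := by rw [abs_mul, abs_of_nonneg h1]
              _ ≤ |w - w'| * 1 := mul_le_mul_of_nonneg_left h2 (abs_nonneg _)
              _ = |w - w'| := mul_one _
          linarith
        have hB : (1 - w) * (y:ℝ×ℝ).2 ≤ (1 - w') * (y:ℝ×ℝ).2 + |w - w'| := by
          have : (w' - w) * (y:ℝ×ℝ).2 ≤ |w - w'| := by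
            calc (w' - w) * (y:ℝ×ℝ).2 ≤ |(w' - w) * (y:ℝ×ℝ).2| := le_abs_self _
              _ = |w' - w| * (y:ℝ×ℝ).2 := by rw [abs_mul, abs_of_nonneg h3]
              _ ≤ |w' - w| * 1 := mul_le_mul_of_nonneg_left h4 (abs_nonneg _)
              _ = |w - w'| := by rw [mul_one, abs_sub_comm]
          linarith
        calc F w ≤ max (w * (y:ℝ×ℝ).1) ((1 - w) * (y:ℝ×ℝ).2) := ciInf_le (bdd w) y
          _ ≤ max (w' * (y:ℝ×ℝ).1 + |w - w'|) ((1 - w') * (y:ℝ×ℝ).2 + |w - w'|) :=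
            max_le_max hA hB
          _ = max (w' * (y:ℝ×ℝ).1) ((1 - w') * (y:ℝ×ℝ).2) + |w - w'| := by
            rw [max_add_add_right]
      linarith
    linarith
  have hcont : Continuous F := by
    have : LipschitzWith 1 F := by
      refine LipschitzWith.of_dist_le_mul fun w w' => ?_
      rw [Real.dist_eq, Real.dist_eq, NNReal.coe_one, one_mul, abs_sub_le_iff]
      constructor
      · have := hlip w w'; linarith
      · have := hlip w' w; rw [abs_sub_comm] at this; linarith
    exact this.continuous
  have hFint : IntervalIntegrable F volume 0 1 := hcont.intervalIntegrable _ _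
  -- pointwise lower bound
  have hlow : ∀ w ∈ Set.Icc (0:ℝ) 1, w * (1 - w) ≤ F w := by
    rintro w ⟨hw0, hw1⟩
    refine le_ciInf fun y => ?_
    obtain ⟨h1, h2, h3, h4⟩ := hco y
    have hsum := habove _ y.2
    by_contra hcon
    push_neg at hcon
    rw [max_lt_iff] at hcon
    obtain ⟨ha, hb⟩ := hcon
    rcases eq_or_lt_of_le hw0 with h0 | h0
    · rw [← h0] at ha; norm_num at ha
    rcases eq_or_lt_of_le hw1 with h1' | h1'
    · rw [h1'] at hb; norm_num at hb
    nlinarith [mul_lt_mul_of_pos_left ha (by linarith : (0:ℝ) < 1 - w),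
      mul_lt_mul_of_pos_left hb h0, mul_pos h0 (by linarith : (0:ℝ) < 1 - w), hsum]
  -- pointwise upper bound
  have hupp : ∀ w ∈ Set.Icc (0:ℝ) 1, F w ≤ 1 - w := by
    rintro w ⟨hw0, hw1⟩
    have : F w ≤ max (w * (0:ℝ)) ((1 - w) * 1) := ciInf_le (bdd w) ⟨((0:ℝ),(1:ℝ)), h01⟩
    simpa [max_eq_right (by linarith : (0:ℝ) ≤ 1 - w)] using this
  -- integral computations
  have hgint : IntervalIntegrable (fun w : ℝ => w * (1 - w)) volume 0 1 :=
    (by fun_prop : Continuous fun w : ℝ => w * (1 - w)).intervalIntegrable _ _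
  have huint : IntervalIntegrable (fun w : ℝ => 1 - w) volume 0 1 :=
    (by fun_prop : Continuous fun w : ℝ => 1 - w).intervalIntegrable _ _
  have hg : (∫ w in (0:ℝ)..1, w * (1 - w)) = 1/6 := by
    have : (fun w : ℝ => w * (1 - w)) = fun w : ℝ => w - w ^ 2 := by funext w; ring
    rw [this, intervalIntegral.integral_sub (Continuous.intervalIntegrable (by fun_prop) _ _)
      (Continuous.intervalIntegrable (by fun_prop) _ _), integral_id,
      integral_pow]
    norm_num
  have hu : (∫ w in (0:ℝ)..1, (1 - w)) = 1/2 := by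
    rw [intervalIntegral.integral_sub (Continuous.intervalIntegrable (by fun_prop) _ _)
      (Continuous.intervalIntegrable (by fun_prop) _ _), integral_id,
      intervalIntegral.integral_const]
    norm_num
  have hle1 : (1:ℝ)/6 ≤ ∫ w in (0:ℝ)..1, F w := by
    rw [← hg]
    exact intervalIntegral.integral_mono_on (by norm_num) hgint hFint hlow
  have hle2 : (∫ w in (0:ℝ)..1, F w) ≤ 1/2 := by
    rw [← hu]
    exact intervalIntegral.integral_mono_on (by norm_num) hFint huint hupp
  refine ⟨hle1, by linarith, ?_⟩
  rintro ⟨w₀, hw₀, hlt⟩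
  refine ⟨?_, by linarith⟩
  rw [← hg]
  refine intervalIntegral.integral_lt_integral_of_continuousOn_of_le_of_exists_lt
    (by norm_num) (by fun_prop) hcont.continuousOn
    (fun x hx => hlow x ⟨hx.1.le, hx.2⟩) ⟨w₀, ⟨hw₀.1.le, hw₀.2.le⟩, hlt⟩
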